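/- Let h > 0 be a real number and let 𝒥 be a finite job set in which every job has width 1 and height h. Then there exists a feasible schedule S of 𝒥 such that for every timeslot t ∈ ℤ, ℓ(S,t) ≤ h · ⌈avg(t)/h⌉. (This is the feasibility and load guarantee of algorithm 𝒰𝒰, which at each timeslot runs ⌈avg(t)/h⌉ available jobs chosen in EDF order.) -/

import Mathlib

open scoped BigOperators NNReal

structure Job where
  r : ℤ
  d : ℤ
  w : ℤ
  h : ℝ

def Job.Valid (J : Job) : Prop := 1 ≤ J.w ∧ 0 < J.h ∧ J.r + J.w ≤ J.d

def Feasible {ι : Type*} (job : ι → Job) (st : ι → ℤ) : Prop :=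
  ∀ i, (job i).r ≤ st i ∧ st i + (job i).w ≤ (job i).d

noncomputable def load {ι : Type*} [Fintype ι] (job : ι → Job) (st : ι → ℤ) (t : ℤ) : ℝ :=
  ∑ i, if st i ≤ t ∧ t < st i + (job i).w then (job i).h else 0

noncomputable def cost {ι : Type*} [Fintype ι] (α : ℝ) (job : ι → Job) (st : ι → ℤ) : ℝ :=
  ∑' t : ℤ, load job st t ^ α

noncomputable def OPT {ι : Type*} [Fintype ι] (α : ℝ) (job : ι → Job) : ℝ :=
  sInf {c : ℝ | ∃ st, Feasible job st ∧ cost α job st = c}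

noncomputable def den (J : Job) : ℝ := (J.w * J.h) / (J.d - J.r)

noncomputable def avg {ι : Type*} [Fintype ι] (job : ι → Job) (t : ℤ) : ℝ :=
  ∑ i, if (job i).r ≤ t ∧ t < (job i).d then den (job i) else 0

theorem stmt14 {ι : Type*} [Fintype ι] (h : ℝ) (hh : 0 < h) (job : ι → Job)
    (hv : ∀ i, (job i).Valid) (hw : ∀ i, (job i).w = 1) (hht : ∀ i, (job i).h = h) :
    ∃ st, Feasible job st ∧
      ∀ t : ℤ, load job st t ≤ h * (⌈avg job t / h⌉ : ℝ) := by
  classical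
  set c : ℤ → ℕ := fun t => (⌈avg job t / h⌉).toNat with hc
  -- basic facts
  have hdr : ∀ i, (1 : ℤ) ≤ (job i).d - (job i).r := by
    intro i; have := (hv i).2.2; have := hw i; omega
  have hdrR : ∀ i, (0 : ℝ) < ((job i).d : ℝ) - ((job i).r : ℝ) := by
    intro i
    have h1 : ((1:ℤ):ℝ) ≤ (((job i).d - (job i).r : ℤ) : ℝ) := Int.cast_le.mpr (hdr i)
    push_cast at h1
    linarith
  have hden : ∀ i, den (job i) = h / (((job i).d : ℝ) - ((job i).r : ℝ)) := by
    intro i; unfold den; rw [hw i, hht i]; push_cast; ring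
  have hden_nonneg : ∀ i, 0 ≤ den (job i) := by
    intro i; rw [hden i]; exact div_nonneg hh.le (hdrR i).le
  have havg_nonneg : ∀ t, 0 ≤ avg job t := by
    intro t; unfold avg
    apply Finset.sum_nonneg; intro i _
    split
    · exact hden_nonneg i
    · exact le_rfl
  have hceil_nonneg : ∀ t, (0 : ℤ) ≤ ⌈avg job t / h⌉ := by
    intro t; exact Int.ceil_nonneg (div_nonneg (havg_nonneg t) hh.le)
  have hcR : ∀ t, avg job t / h ≤ (c t : ℝ) := by
    intro t
    calc avg job t / h ≤ (⌈avg job t / h⌉ : ℝ) := Int.le_ceil _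
      _ ≤ ((⌈avg job t / h⌉).toNat : ℝ) := by exact_mod_cast Int.self_le_toNat _
  -- window of job i
  set W : ι → Finset ℤ := fun i => Finset.Ico (job i).r (job i).d with hW
  have hWsum : ∀ i, ∑ t ∈ W i, den (job i) = h := by
    intro i
    rw [Finset.sum_const, hW]
    simp only [Int.card_Ico, nsmul_eq_mul, hden i]
    have h1 : (((job i).d - (job i).r).toNat : ℤ) = (job i).d - (job i).r :=
      Int.toNat_of_nonneg (by linarith [hdr i])
    have h2 : (((job i).d - (job i).r).toNat : ℝ) = ((job i).d : ℝ) - (job i).r := by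
      exact_mod_cast h1
    rw [h2]
    rw [mul_div_assoc']
    exact mul_div_cancel_left₀ h (hdrR i).ne'
  -- target sets for Hall
  set T : ι → Finset (ℤ × ℕ) := fun i => (W i).biUnion fun t => {t} ×ˢ Finset.range (c t) with hT
  have hall : ∀ s : Finset ι, s.card ≤ (s.biUnion T).card := by
    intro s
    have hUnion : s.biUnion T = (s.biUnion W).biUnion fun t => {t} ×ˢ Finset.range (c t) := by
      rw [hT, Finset.biUnion_biUnion]
    set U := s.biUnion W with hU
    have hcard : (s.biUnion T).card = ∑ t ∈ U, c t := by
      rw [hUnion, Finset.card_biUnion]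
      · apply Finset.sum_congr rfl; intro t _; simp
      · intro a _ b _ hab
        simp only [Finset.disjoint_left]
        intro p hp hq
        simp only [Finset.mem_product, Finset.mem_singleton] at hp hq
        exact hab (hp.1 ▸ hq.1.symm ▸ rfl)
    rw [hcard]
    -- real inequality chain
    have key : (s.card : ℝ) * h ≤ ∑ t ∈ U, avg job t := by
      have h1 : ∀ i ∈ s, ∑ t ∈ U, (if (job i).r ≤ t ∧ t < (job i).d then den (job i) else 0) = h := by
        intro i hi
        have hsub : W i ⊆ U := Finset.subset_biUnion_of_mem W hi
        have : ∀ t, ((job i).r ≤ t ∧ t < (job i).d) ↔ t ∈ W i := by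
          intro t; rw [hW]; simp [Finset.mem_Ico]
        calc ∑ t ∈ U, (if (job i).r ≤ t ∧ t < (job i).d then den (job i) else 0)
            = ∑ t ∈ U, (if t ∈ W i then den (job i) else 0) := by
              apply Finset.sum_congr rfl; intro t _; rw [if_congr (this t) rfl rfl]
          _ = ∑ t ∈ U ∩ W i, den (job i) := by rw [Finset.sum_ite_mem]
          _ = ∑ t ∈ W i, den (job i) := by rw [Finset.inter_eq_right.mpr hsub]
          _ = h := hWsum i
      calc (s.card : ℝ) * h = ∑ i ∈ s, h := by rw [Finset.sum_const, nsmul_eq_mul]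
        _ = ∑ i ∈ s, ∑ t ∈ U, (if (job i).r ≤ t ∧ t < (job i).d then den (job i) else 0) := by
            apply Finset.sum_congr rfl; intro i hi; rw [h1 i hi]
        _ = ∑ t ∈ U, ∑ i ∈ s, (if (job i).r ≤ t ∧ t < (job i).d then den (job i) else 0) :=
            Finset.sum_comm
        _ ≤ ∑ t ∈ U, avg job t := by
            apply Finset.sum_le_sum; intro t _
            unfold avg
            apply Finset.sum_le_sum_of_subset_of_nonneg (Finset.subset_univ s)
            intro i _ _
            split
            · exact hden_nonneg i
            · exact le_rfl
    have key2 : (s.card : ℝ) ≤ ∑ t ∈ U, (c t : ℝ) := by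
      have h2 : ∑ t ∈ U, avg job t ≤ ∑ t ∈ U, h * (c t : ℝ) := by
        apply Finset.sum_le_sum; intro t _
        have := hcR t
        calc avg job t = (avg job t / h) * h := by field_simp
          _ ≤ (c t : ℝ) * h := by nlinarith
          _ = h * (c t : ℝ) := mul_comm _ _
      rw [← Finset.mul_sum] at h2
      have := key.trans h2
      nlinarith [Finset.sum_nonneg (fun t (_ : t ∈ U) => Nat.cast_nonneg (α := ℝ) (c t))]
    exact_mod_cast key2
  obtain ⟨f, hfinj, hfmem⟩ := (Finset.all_card_le_biUnion_card_iff_exists_injective T).mp hall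
  refine ⟨fun i => (f i).1, ?_, ?_⟩
  · intro i
    have := hfmem i
    rw [hT] at this
    simp only [Finset.mem_biUnion, Finset.mem_product, Finset.mem_singleton, Finset.mem_range] at this
    obtain ⟨t, ht, h1, _⟩ := this
    rw [hW, Finset.mem_Ico] at ht
    rw [hw i]
    dsimp only
    omega
  · intro t
    -- load = h * count
    have hload : load job (fun i => (f i).1) t
        = ∑ i, (if (f i).1 = t then h else 0) := by
      unfold load
      apply Finset.sum_congr rfl
      intro i _
      rw [hw i, hht i]
      have : ((f i).1 ≤ t ∧ t < (f i).1 + 1) ↔ (f i).1 = t := by omega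
      rw [if_congr this rfl rfl]
    set F := Finset.univ.filter (fun i => (f i).1 = t) with hF
    have hload2 : load job (fun i => (f i).1) t = (F.card : ℝ) * h := by
      rw [hload, ← Finset.sum_filter, ← hF, Finset.sum_const, nsmul_eq_mul]
    have hcount : F.card ≤ c t := by
      have : F.card ≤ (Finset.range (c t)).card := by
        apply Finset.card_le_card_of_injOn (fun i => (f i).2)
        · intro i hi
          rw [hF, Finset.mem_coe, Finset.mem_filter] at hi
          have hm := hfmem i
          rw [hT] at hm
          simp only [Finset.mem_biUnion, Finset.mem_product, Finset.mem_singleton,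
            Finset.mem_range] at hm
          obtain ⟨t', _, h1, h2⟩ := hm
          have ht' : t' = t := by rw [← h1, hi.2]
          rw [Finset.mem_coe, Finset.mem_range]
          exact ht' ▸ h2
        · intro i hi j hj hij
          simp only [hF, Finset.coe_filter, Set.mem_setOf_eq] at hi hj
          apply hfinj
          exact Prod.ext (hi.2.trans hj.2.symm) hij
      simpa using this
    have hcast : (c t : ℝ) = (⌈avg job t / h⌉ : ℝ) := by
      rw [hc]
      exact_mod_cast Int.toNat_of_nonneg (hceil_nonneg t)
    rw [hload2]
    calc (F.card : ℝ) * h ≤ (c t : ℝ) * h := by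
          apply mul_le_mul_of_nonneg_right _ hh.le
          exact_mod_cast hcount
      _ = h * (⌈avg job t / h⌉ : ℝ) := by rw [hcast, mul_comm]
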